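/- Let λ > 0 and let a : ℤ → ℝ be a sequence with residual ε[k] = a[k] − M_λ(a[k]) (so ε takes values in 2λℤ). If ‖Δ^N a‖_∞ < λ, then the N-th difference of the residual can be computed from the modulo samples y = M_λ ∘ a via (Δ^N ε)[k] = M_λ((Δ^N y)[k]) − (Δ^N y)[k]. -/
import Mathlib


/-- Centered modulo operation. -/
noncomputable def cmod (lam f : ℝ) : ℝ :=
  2 * lam * (Int.fract (f / (2 * lam) + 1 / 2) - 1 / 2)

/-- Forward finite difference on sequences. -/
def fdiff (a : ℤ → ℝ) : ℤ → ℝ := fun k => a (k + 1) - a k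

lemma fdiff_sub (f g : ℤ → ℝ) :
    fdiff (fun k => f k - g k) = fun k => fdiff f k - fdiff g k := by
  funext k; simp [fdiff]; ring

lemma fdiff_iter_sub (N : ℕ) (f g : ℤ → ℝ) :
    fdiff^[N] (fun k => f k - g k) = fun k => fdiff^[N] f k - fdiff^[N] g k := by
  induction N generalizing f g with
  | zero => rfl
  | succ n ih =>
    rw [Function.iterate_succ_apply, fdiff_sub, ih]
    simp [Function.iterate_succ_apply]

lemma cmod_eq_self (lam x : ℝ) (hlam : 0 < lam) (hx : |x| < lam) :
    cmod lam x = x := by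
  have h2 : (0:ℝ) < 2 * lam := by linarith
  have h1 : -lam < x := by cases abs_lt.mp hx; linarith
  have h2' : x < lam := by cases abs_lt.mp hx; assumption
  have hfr : Int.fract (x / (2 * lam) + 1 / 2) = x / (2 * lam) + 1 / 2 := by
    apply Int.fract_eq_self.mpr
    constructor
    · have : -(1/2 : ℝ) < x / (2 * lam) := by
        rw [lt_div_iff₀ h2]; linarith
      linarith
    · have : x / (2 * lam) < 1/2 := by
        rw [div_lt_iff₀ h2]; linarith
      linarith
  rw [cmod, hfr]
  field_simp
  ring

lemma cmod_sub_int_mul (lam x : ℝ) (hlam : 0 < lam) (m : ℤ) :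
    cmod lam (x - 2 * lam * m) = cmod lam x := by
  have h2 : (2 * lam) ≠ 0 := by positivity
  have : (x - 2 * lam * m) / (2 * lam) + 1 / 2
      = (x / (2 * lam) + 1 / 2) - m := by field_simp; ring
  rw [cmod, this, Int.fract_sub_intCast, cmod]

lemma fdiff_iter_mem (lam : ℝ) (N : ℕ) (f : ℤ → ℝ)
    (hf : ∀ k, ∃ m : ℤ, f k = 2 * lam * m) :
    ∀ k, ∃ m : ℤ, fdiff^[N] f k = 2 * lam * m := by
  induction N generalizing f with
  | zero => simpa using hf
  | succ n ih =>
    rw [Function.iterate_succ_apply]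
    apply ih
    intro k
    obtain ⟨m1, h1⟩ := hf (k + 1)
    obtain ⟨m2, h2⟩ := hf k
    exact ⟨m1 - m2, by simp [fdiff, h1, h2]; push_cast; ring⟩

theorem recover_residual_fdiff (lam : ℝ) (hlam : 0 < lam)
    (a y ε : ℤ → ℝ) (hy : ∀ k : ℤ, y k = cmod lam (a k))
    (hε : ∀ k : ℤ, ε k = a k - cmod lam (a k)) (N : ℕ)
    (hbound : ∀ k : ℤ, |fdiff^[N] a k| < lam) :
    ∀ k : ℤ, fdiff^[N] ε k = cmod lam (fdiff^[N] y k) - fdiff^[N] y k := by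
  intro k
  have hεy : ε = fun k => a k - y k := by funext k; rw [hε, hy]
  have hsub : fdiff^[N] ε k = fdiff^[N] a k - fdiff^[N] y k := by
    rw [hεy, fdiff_iter_sub]
  have hεmul : ∀ j, ∃ m : ℤ, ε j = 2 * lam * m := by
    intro j
    refine ⟨⌊a j / (2 * lam) + 1 / 2⌋, ?_⟩
    rw [hε, cmod, Int.fract]
    have h2 : (2 * lam) ≠ 0 := by positivity
    field_simp
    ring
  obtain ⟨m, hm⟩ := fdiff_iter_mem lam N ε hεmul k
  have hyk : fdiff^[N] y k = fdiff^[N] a k - 2 * lam * m := by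
    rw [← hm]; linarith [hsub]
  rw [hyk, cmod_sub_int_mul lam _ hlam, cmod_eq_self lam _ hlam (hbound k)]
  linarith [hsub, hm]
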